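/- Let σ ∈ S_n and let τ = (v, π) ∈ B_n commute with (0, σ) ∈ B_n (so π commutes with σ and v is constant on each σ-orbit). Then φ((0,σ), τ) = ε̂^N, where N = Σ_C v(k_C)·(|C| − 1), the sum being over the orbits C of σ on Fin n, k_C denoting any element of C and v(k_C) ∈ {0,1} the common value of v on C, and |C| the cardinality of C. -/

import Mathlib

open Finset Equiv

/-- `Qf n a b = ∑_{i < j} a i * b j`. -/
def Qf (n : ℕ) (a b : Fin n → ZMod 2) : ZMod 2 :=
  ∑ p ∈ Finset.univ.filter (fun p : Fin n × Fin n => p.1 < p.2), a p.1 * b p.2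

/-- The underlying set of the group `H n`: pairs `(a, b)` with
`a : Fin n → ZMod 2` and `b : ZMod 2`. -/
@[ext] structure H (n : ℕ) where
  a : Fin n → ZMod 2
  b : ZMod 2

namespace H

variable {n : ℕ}

instance : Mul (H n) := ⟨fun x y => ⟨x.a + y.a, x.b + y.b + Qf n x.a y.a⟩⟩
instance : One (H n) := ⟨⟨0, 0⟩⟩
instance : Inv (H n) := ⟨fun x => ⟨x.a, x.b + Qf n x.a x.a⟩⟩

@[simp] lemma mul_a (x y : H n) : (x * y).a = x.a + y.a := rfl
@[simp] lemma mul_b (x y : H n) : (x * y).b = x.b + y.b + Qf n x.a y.a := rfl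
@[simp] lemma one_a : (1 : H n).a = 0 := rfl
@[simp] lemma one_b : (1 : H n).b = 0 := rfl
@[simp] lemma inv_a (x : H n) : (x⁻¹).a = x.a := rfl
@[simp] lemma inv_b (x : H n) : (x⁻¹).b = x.b + Qf n x.a x.a := rfl

lemma Qf_add_left (a a' b : Fin n → ZMod 2) :
    Qf n (a + a') b = Qf n a b + Qf n a' b := by
  simp [Qf, add_mul, Finset.sum_add_distrib]

lemma Qf_add_right (a b b' : Fin n → ZMod 2) :
    Qf n a (b + b') = Qf n a b + Qf n a b' := by
  simp [Qf, mul_add, Finset.sum_add_distrib]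

@[simp] lemma Qf_zero_left (b : Fin n → ZMod 2) : Qf n 0 b = 0 := by simp [Qf]
@[simp] lemma Qf_zero_right (a : Fin n → ZMod 2) : Qf n a 0 = 0 := by simp [Qf]

instance : Group (H n) where
  mul_assoc x y z := by
    ext i
    · simp [add_assoc]
    · simp only [mul_b, mul_a, Qf_add_left, Qf_add_right]
      ring
  one_mul x := by ext i <;> simp
  mul_one x := by ext i <;> simp
  inv_mul_cancel x := by
    ext i
    · show x.a i + x.a i = 0
      generalize x.a i = u; revert u; decide
    · show x.b + Qf n x.a x.a + x.b + Qf n x.a x.a = 0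
      generalize x.b = u; generalize Qf n x.a x.a = q
      revert u q; decide

end H

/-- The generator `x_i = (e_i, 0)` of `H n`. -/
def xgen (n : ℕ) (i : Fin n) : H n := ⟨Pi.single i 1, 0⟩

/-- The central element `ε = (0, 1)` of `H n`. -/
def eps (n : ℕ) : H n := ⟨0, 1⟩

/-- `Rf n σ a = ∑_{i < j, σ i > σ j} a i * a j`. -/
def Rf (n : ℕ) (σ : Equiv.Perm (Fin n)) (a : Fin n → ZMod 2) : ZMod 2 :=
  ∑ p ∈ Finset.univ.filter
      (fun p : Fin n × Fin n => p.1 < p.2 ∧ σ p.2 < σ p.1), a p.1 * a p.2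

/-- The action of `σ ∈ Sₙ` on `H n`:
`σ · (a, b) = (a ∘ σ⁻¹, b + ∑_{i<j, σ i > σ j} a i * a j)`. -/
def actH (n : ℕ) (σ : Equiv.Perm (Fin n)) (g : H n) : H n :=
  ⟨g.a ∘ σ.symm, g.b + Rf n σ g.a⟩

section Lemmas

open Finset Equiv

variable {n : ℕ}

private lemma two_cancel : ∀ x : ZMod 2, x + x = 0 := by decide

/-- Reindexing a pair-sum by a permutation acting diagonally. -/
private lemma sum_pair_perm (τ : Equiv.Perm (Fin n)) (c : Fin n × Fin n → Prop)
    [DecidablePred c] (f : Fin n → Fin n → ZMod 2) :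
    ∑ p ∈ Finset.univ.filter (fun p : Fin n × Fin n => c (τ p.1, τ p.2)), f (τ p.1) (τ p.2)
      = ∑ p ∈ Finset.univ.filter c, f p.1 p.2 := by
  apply Finset.sum_equiv (Equiv.prodCongr τ τ) <;> simp

/-- Reindexing a pair-sum by the swap. -/
private lemma sum_pair_swap (c : Fin n × Fin n → Prop)
    [DecidablePred c] (f : Fin n → Fin n → ZMod 2) :
    ∑ p ∈ Finset.univ.filter c, f p.1 p.2
      = ∑ p ∈ Finset.univ.filter (fun p : Fin n × Fin n => c (p.2, p.1)), f p.2 p.1 := by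
  apply Finset.sum_equiv (Equiv.prodComm (Fin n) (Fin n)) <;> simp

end Lemmas

section Lemmas2

open Finset Equiv

variable {n : ℕ}

private lemma flip_lt {x y : Fin n} (hne : x ≠ y) : ¬ x < y ↔ y < x :=
  ⟨fun h => lt_of_le_of_ne (not_lt.mp h) hne.symm, fun h h' => absurd h' (asymm h)⟩

private lemma Rf_add (σ : Equiv.Perm (Fin n)) (a b : Fin n → ZMod 2) :
    Rf n σ (a + b) = Rf n σ a + Rf n σ b
      + ∑ p ∈ Finset.univ.filter (fun p : Fin n × Fin n => p.1 < p.2 ∧ σ p.2 < σ p.1),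
          (a p.1 * b p.2 + b p.1 * a p.2) := by
  simp only [Rf, ← Finset.sum_add_distrib]
  apply Finset.sum_congr rfl
  intro p _
  simp only [Pi.add_apply]
  ring

private lemma Qf_act (σ : Equiv.Perm (Fin n)) (a b : Fin n → ZMod 2) :
    Qf n (a ∘ σ.symm) (b ∘ σ.symm)
      = Qf n a b
        + ∑ p ∈ Finset.univ.filter (fun p : Fin n × Fin n => p.1 < p.2 ∧ σ p.2 < σ p.1),
            (a p.1 * b p.2 + b p.1 * a p.2) := by
  classical
  have h1 : Qf n (a ∘ σ.symm) (b ∘ σ.symm)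
      = ∑ p ∈ Finset.univ.filter (fun p : Fin n × Fin n => σ p.1 < σ p.2),
          a p.1 * b p.2 := by
    rw [Qf]
    apply Finset.sum_equiv (Equiv.prodCongr σ.symm σ.symm) <;> simp
  have h2 : ∑ p ∈ Finset.univ.filter (fun p : Fin n × Fin n => σ p.1 < σ p.2), a p.1 * b p.2
      = ∑ p ∈ Finset.univ.filter
            (fun p : Fin n × Fin n => σ p.1 < σ p.2 ∧ p.1 < p.2), a p.1 * b p.2
        + ∑ p ∈ Finset.univ.filter
            (fun p : Fin n × Fin n => σ p.1 < σ p.2 ∧ p.2 < p.1), a p.1 * b p.2 := by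
    rw [← Finset.sum_filter_add_sum_filter_not
      (Finset.univ.filter (fun p : Fin n × Fin n => σ p.1 < σ p.2))
      (fun p : Fin n × Fin n => p.1 < p.2)]
    congr 1
    · rw [Finset.filter_filter]
    · rw [Finset.filter_filter]
      refine Finset.sum_congr (Finset.filter_congr ?_) (fun _ _ => rfl)
      intro p _
      constructor
      · rintro ⟨h1', h2'⟩
        have hne : p.1 ≠ p.2 := fun h => absurd (h ▸ h1' : σ p.1 < σ p.1) (lt_irrefl _)
        exact ⟨h1', (flip_lt hne).mp h2'⟩
      · rintro ⟨h1', h2'⟩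
        exact ⟨h1', fun h => absurd h (asymm h2')⟩
  have h3 : ∑ p ∈ Finset.univ.filter
        (fun p : Fin n × Fin n => σ p.1 < σ p.2 ∧ p.2 < p.1), a p.1 * b p.2
      = ∑ p ∈ Finset.univ.filter
            (fun p : Fin n × Fin n => p.1 < p.2 ∧ σ p.2 < σ p.1), b p.1 * a p.2 := by
    rw [sum_pair_swap (fun p : Fin n × Fin n => σ p.1 < σ p.2 ∧ p.2 < p.1)
      (fun i j => a i * b j)]
    refine Finset.sum_congr (Finset.filter_congr ?_) ?_
    · intro p _
      exact ⟨fun h => ⟨h.2, h.1⟩, fun h => ⟨h.2, h.1⟩⟩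
    · intro p _; ring
  have h4 : Qf n a b
      = ∑ p ∈ Finset.univ.filter
            (fun p : Fin n × Fin n => σ p.1 < σ p.2 ∧ p.1 < p.2), a p.1 * b p.2
        + ∑ p ∈ Finset.univ.filter
            (fun p : Fin n × Fin n => p.1 < p.2 ∧ σ p.2 < σ p.1), a p.1 * b p.2 := by
    rw [Qf, ← Finset.sum_filter_add_sum_filter_not
      (Finset.univ.filter (fun p : Fin n × Fin n => p.1 < p.2))
      (fun p : Fin n × Fin n => σ p.1 < σ p.2)]
    congr 1
    · rw [Finset.filter_filter]
      refine Finset.sum_congr (Finset.filter_congr ?_) (fun _ _ => rfl)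
      intro p _
      exact ⟨fun h => ⟨h.2, h.1⟩, fun h => ⟨h.2, h.1⟩⟩
    · rw [Finset.filter_filter]
      refine Finset.sum_congr (Finset.filter_congr ?_) (fun _ _ => rfl)
      intro p _
      constructor
      · rintro ⟨h1', h2'⟩
        have hne : σ p.1 ≠ σ p.2 := fun h =>
          absurd h1' (by rw [σ.injective h]; exact lt_irrefl _)
        exact ⟨h1', (flip_lt hne).mp h2'⟩
      · rintro ⟨h1', h2'⟩
        exact ⟨h1', fun h => absurd h (asymm h2')⟩
  have h5 : ∑ p ∈ Finset.univ.filter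
        (fun p : Fin n × Fin n => p.1 < p.2 ∧ σ p.2 < σ p.1),
          (a p.1 * b p.2 + b p.1 * a p.2)
      = ∑ p ∈ Finset.univ.filter
            (fun p : Fin n × Fin n => p.1 < p.2 ∧ σ p.2 < σ p.1), a p.1 * b p.2
        + ∑ p ∈ Finset.univ.filter
            (fun p : Fin n × Fin n => p.1 < p.2 ∧ σ p.2 < σ p.1), b p.1 * a p.2 :=
    Finset.sum_add_distrib
  rw [h1, h2, h3, h4, h5]
  have h6 := two_cancel (∑ p ∈ Finset.univ.filter
      (fun p : Fin n × Fin n => p.1 < p.2 ∧ σ p.2 < σ p.1), a p.1 * b p.2)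
  linear_combination -h6

end Lemmas2

section Lemmas3

open Finset Equiv

variable {n : ℕ}

private lemma Rf_comp (σ τ : Equiv.Perm (Fin n)) (a : Fin n → ZMod 2) :
    Rf n (σ * τ) a = Rf n τ a + Rf n σ (a ∘ τ.symm) := by
  classical
  -- rewrite `Rf (σ * τ)`
  have hA : Rf n (σ * τ) a
      = ∑ p ∈ Finset.univ.filter
          (fun p : Fin n × Fin n => p.1 < p.2 ∧ σ (τ p.2) < σ (τ p.1)), a p.1 * a p.2 := by
    rw [Rf]
    refine Finset.sum_congr (Finset.filter_congr ?_) (fun _ _ => rfl)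
    intro p _
    simp [Equiv.Perm.mul_apply]
  -- split it according to the relative order of `τ p.1`, `τ p.2`
  have hB : ∑ p ∈ Finset.univ.filter
        (fun p : Fin n × Fin n => p.1 < p.2 ∧ σ (τ p.2) < σ (τ p.1)), a p.1 * a p.2
      = ∑ p ∈ Finset.univ.filter
            (fun p : Fin n × Fin n =>
              (p.1 < p.2 ∧ σ (τ p.2) < σ (τ p.1)) ∧ τ p.1 < τ p.2), a p.1 * a p.2
        + ∑ p ∈ Finset.univ.filter
            (fun p : Fin n × Fin n =>
              (p.1 < p.2 ∧ σ (τ p.2) < σ (τ p.1)) ∧ τ p.2 < τ p.1), a p.1 * a p.2 := by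
    rw [← Finset.sum_filter_add_sum_filter_not
      (Finset.univ.filter
        (fun p : Fin n × Fin n => p.1 < p.2 ∧ σ (τ p.2) < σ (τ p.1)))
      (fun p : Fin n × Fin n => τ p.1 < τ p.2)]
    congr 1
    · rw [Finset.filter_filter]
    · rw [Finset.filter_filter]
      refine Finset.sum_congr (Finset.filter_congr ?_) (fun _ _ => rfl)
      intro p _
      constructor
      · rintro ⟨h1, h2⟩
        have hne : τ p.1 ≠ τ p.2 := fun h => absurd h1.1 (by
          have := τ.injective h; rw [this]; exact lt_irrefl _)
        exact ⟨h1, (flip_lt hne).mp h2⟩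
      · rintro ⟨h1, h2⟩
        exact ⟨h1, fun h => absurd h (asymm h2)⟩
  -- split `Rf τ a` according to the relative order of `στ p.1`, `στ p.2`
  have hC : Rf n τ a
      = ∑ p ∈ Finset.univ.filter
            (fun p : Fin n × Fin n =>
              (p.1 < p.2 ∧ τ p.2 < τ p.1) ∧ σ (τ p.1) < σ (τ p.2)), a p.1 * a p.2
        + ∑ p ∈ Finset.univ.filter
            (fun p : Fin n × Fin n =>
              (p.1 < p.2 ∧ σ (τ p.2) < σ (τ p.1)) ∧ τ p.2 < τ p.1), a p.1 * a p.2 := by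
    rw [Rf, ← Finset.sum_filter_add_sum_filter_not
      (Finset.univ.filter
        (fun p : Fin n × Fin n => p.1 < p.2 ∧ τ p.2 < τ p.1))
      (fun p : Fin n × Fin n => σ (τ p.1) < σ (τ p.2))]
    congr 1
    · rw [Finset.filter_filter]
    · rw [Finset.filter_filter]
      refine Finset.sum_congr (Finset.filter_congr ?_) (fun _ _ => rfl)
      intro p _
      constructor
      · rintro ⟨h1, h2⟩
        have hne : σ (τ p.1) ≠ σ (τ p.2) := fun h => absurd h1.2 (by
          have := σ.injective h; rw [this]; exact lt_irrefl _)
        exact ⟨⟨h1.1, (flip_lt hne).mp h2⟩, h1.2⟩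
      · rintro ⟨h1, h2⟩
        exact ⟨⟨h1.1, h2⟩, fun h => absurd h (asymm h1.2)⟩
  -- reindex `Rf σ (a ∘ τ.symm)` and split according to the order of `p.1`, `p.2`
  have hD : Rf n σ (a ∘ τ.symm)
      = ∑ p ∈ Finset.univ.filter
          (fun p : Fin n × Fin n => τ p.1 < τ p.2 ∧ σ (τ p.2) < σ (τ p.1)),
            a p.1 * a p.2 := by
    rw [Rf]
    apply Finset.sum_equiv (Equiv.prodCongr τ.symm τ.symm) <;> simp
  have hE : ∑ p ∈ Finset.univ.filter
        (fun p : Fin n × Fin n => τ p.1 < τ p.2 ∧ σ (τ p.2) < σ (τ p.1)), a p.1 * a p.2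
      = ∑ p ∈ Finset.univ.filter
            (fun p : Fin n × Fin n =>
              (p.1 < p.2 ∧ σ (τ p.2) < σ (τ p.1)) ∧ τ p.1 < τ p.2), a p.1 * a p.2
        + ∑ p ∈ Finset.univ.filter
            (fun p : Fin n × Fin n =>
              (τ p.1 < τ p.2 ∧ σ (τ p.2) < σ (τ p.1)) ∧ p.2 < p.1), a p.1 * a p.2 := by
    rw [← Finset.sum_filter_add_sum_filter_not
      (Finset.univ.filter
        (fun p : Fin n × Fin n => τ p.1 < τ p.2 ∧ σ (τ p.2) < σ (τ p.1)))
      (fun p : Fin n × Fin n => p.1 < p.2)]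
    congr 1
    · rw [Finset.filter_filter]
      refine Finset.sum_congr (Finset.filter_congr ?_) (fun _ _ => rfl)
      intro p _
      exact ⟨fun h => ⟨⟨h.2, h.1.2⟩, h.1.1⟩, fun h => ⟨⟨h.2, h.1.2⟩, h.1.1⟩⟩
    · rw [Finset.filter_filter]
      refine Finset.sum_congr (Finset.filter_congr ?_) (fun _ _ => rfl)
      intro p _
      constructor
      · rintro ⟨h1, h2⟩
        have hne : p.1 ≠ p.2 := fun h => absurd h1.1 (by rw [h]; exact lt_irrefl _)
        exact ⟨h1, (flip_lt hne).mp h2⟩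
      · rintro ⟨h1, h2⟩
        exact ⟨h1, fun h => absurd h (asymm h2)⟩
  -- swap the second piece of `hE`
  have hF : ∑ p ∈ Finset.univ.filter
        (fun p : Fin n × Fin n =>
          (τ p.1 < τ p.2 ∧ σ (τ p.2) < σ (τ p.1)) ∧ p.2 < p.1), a p.1 * a p.2
      = ∑ p ∈ Finset.univ.filter
            (fun p : Fin n × Fin n =>
              (p.1 < p.2 ∧ τ p.2 < τ p.1) ∧ σ (τ p.1) < σ (τ p.2)), a p.1 * a p.2 := by
    rw [sum_pair_swap
      (fun p : Fin n × Fin n => (τ p.1 < τ p.2 ∧ σ (τ p.2) < σ (τ p.1)) ∧ p.2 < p.1)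
      (fun i j => a i * a j)]
    refine Finset.sum_congr (Finset.filter_congr ?_) ?_
    · intro p _
      exact ⟨fun h => ⟨⟨h.2, h.1.1⟩, h.1.2⟩, fun h => ⟨⟨h.1.2, h.2⟩, h.1.1⟩⟩
    · intro p _; ring
  rw [hA, hB, hC, hD, hE, hF]
  have h6 := two_cancel (∑ p ∈ Finset.univ.filter
      (fun p : Fin n × Fin n =>
        (p.1 < p.2 ∧ τ p.2 < τ p.1) ∧ σ (τ p.1) < σ (τ p.2)), a p.1 * a p.2)
  linear_combination -h6

end Lemmas3

/-- The group `G n = H n ⋊ Sₙ` (the semidirect product for the action `actH`). -/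
@[ext] structure G (n : ℕ) where
  h : H n
  s : Equiv.Perm (Fin n)

section ActLemmas

open Finset Equiv

variable {n : ℕ}

private lemma actH_mul (σ : Equiv.Perm (Fin n)) (g h : H n) :
    actH n σ (g * h) = actH n σ g * actH n σ h := by
  refine H.ext ?_ ?_
  · funext i; rfl
  · show (g.b + h.b + Qf n g.a h.a) + Rf n σ (g.a + h.a)
       = (g.b + Rf n σ g.a) + (h.b + Rf n σ h.a) + Qf n (g.a ∘ σ.symm) (h.a ∘ σ.symm)
    rw [Rf_add, Qf_act]
    ring

private lemma actH_one_perm (g : H n) : actH n (1 : Equiv.Perm (Fin n)) g = g := by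
  refine H.ext ?_ ?_
  · funext i; rfl
  · show g.b + Rf n 1 g.a = g.b
    have h0 : Rf n (1 : Equiv.Perm (Fin n)) g.a = 0 := by
      rw [Rf, Finset.filter_false_of_mem, Finset.sum_empty]
      rintro p _ ⟨h1, h2⟩
      exact absurd h2 (asymm h1)
    rw [h0, add_zero]

private lemma actH_H_one (σ : Equiv.Perm (Fin n)) : actH n σ (1 : H n) = 1 := by
  refine H.ext ?_ ?_
  · funext i; rfl
  · show (0 : ZMod 2) + Rf n σ (0 : Fin n → ZMod 2) = 0
    simp [Rf]

private lemma actH_comp (σ τ : Equiv.Perm (Fin n)) (g : H n) :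
    actH n (σ * τ) g = actH n σ (actH n τ g) := by
  refine H.ext ?_ ?_
  · funext i; rfl
  · show g.b + Rf n (σ * τ) g.a = (g.b + Rf n τ g.a) + Rf n σ (g.a ∘ τ.symm)
    rw [Rf_comp]
    ring

end ActLemmas

namespace G

variable {n : ℕ}

instance : Mul (G n) := ⟨fun x y => ⟨x.h * actH n x.s y.h, x.s * y.s⟩⟩
instance : One (G n) := ⟨⟨1, 1⟩⟩
instance : Inv (G n) := ⟨fun x => ⟨actH n x.s⁻¹ x.h⁻¹, x.s⁻¹⟩⟩

@[simp] lemma mul_h (x y : G n) : (x * y).h = x.h * actH n x.s y.h := rfl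
@[simp] lemma mul_s (x y : G n) : (x * y).s = x.s * y.s := rfl
@[simp] lemma one_h : (1 : G n).h = 1 := rfl
@[simp] lemma one_s : (1 : G n).s = 1 := rfl

instance : Group (G n) where
  mul_assoc x y z := by
    refine G.ext ?_ ?_
    · show (x.h * actH n x.s y.h) * actH n (x.s * y.s) z.h
         = x.h * actH n x.s (y.h * actH n y.s z.h)
      rw [actH_mul, ← actH_comp]
      exact mul_assoc _ _ _
    · exact mul_assoc x.s y.s z.s
  one_mul x := by
    refine G.ext ?_ ?_
    · show (1 : H n) * actH n 1 x.h = x.h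
      rw [actH_one_perm, one_mul]
    · exact one_mul x.s
  mul_one x := by
    refine G.ext ?_ ?_
    · show x.h * actH n x.s 1 = x.h
      rw [actH_H_one, mul_one]
    · exact mul_one x.s
  inv_mul_cancel x := by
    refine G.ext ?_ ?_
    · show actH n x.s⁻¹ x.h⁻¹ * actH n x.s⁻¹ x.h = 1
      rw [← actH_mul, inv_mul_cancel, actH_H_one]
    · exact inv_mul_cancel x.s

end G

/-- The hyperoctahedral group `B n = (ZMod 2)ⁿ ⋊ Sₙ`, with
`(a₁, π₁) * (a₂, π₂) = (a₁ + a₂ ∘ π₁⁻¹, π₁ * π₂)`. -/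
@[ext] structure B (n : ℕ) where
  a : Fin n → ZMod 2
  s : Equiv.Perm (Fin n)

namespace B

variable {n : ℕ}

instance : Mul (B n) := ⟨fun x y => ⟨x.a + y.a ∘ x.s.symm, x.s * y.s⟩⟩
instance : One (B n) := ⟨⟨0, 1⟩⟩
instance : Inv (B n) := ⟨fun x => ⟨x.a ∘ x.s, x.s⁻¹⟩⟩

@[simp] lemma mul_a (x y : B n) : (x * y).a = x.a + y.a ∘ x.s.symm := rfl
@[simp] lemma mul_s (x y : B n) : (x * y).s = x.s * y.s := rfl
@[simp] lemma one_a : (1 : B n).a = 0 := rfl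
@[simp] lemma one_s : (1 : B n).s = 1 := rfl

instance : Group (B n) where
  mul_assoc x y z := by
    refine B.ext ?_ ?_
    · funext i
      show x.a i + y.a (x.s.symm i) + z.a (y.s.symm (x.s.symm i))
         = x.a i + (y.a (x.s.symm i) + z.a (y.s.symm (x.s.symm i)))
      exact add_assoc _ _ _
    · exact mul_assoc x.s y.s z.s
  one_mul x := by
    refine B.ext ?_ ?_
    · funext i
      show (0 : ZMod 2) + x.a i = x.a i
      exact zero_add _
    · exact one_mul x.s
  mul_one x := by
    refine B.ext ?_ ?_
    · funext i
      show x.a i + (0 : ZMod 2) = x.a i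
      exact add_zero _
    · exact mul_one x.s
  inv_mul_cancel x := by
    refine B.ext ?_ ?_
    · funext i
      show x.a (x.s i) + x.a ((x.s⁻¹).symm i) = 0
      have h : (x.s⁻¹).symm i = x.s i := rfl
      rw [h]
      generalize x.a (x.s i) = u; revert u; decide
    · exact inv_mul_cancel x.s

end B

/-- The projection `p : G n → B n`, `((a, b), σ) ↦ (a, σ)`. -/
def pG (n : ℕ) (g : G n) : B n := ⟨g.h.a, g.s⟩

/-- The central element `ε̂ = ((0,1), 1)` of `G n`. -/
def epsG (n : ℕ) : G n := ⟨⟨0, 1⟩, 1⟩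

/-- The orbit of `k` under the cyclic group generated by `σ`, as a `Finset`. -/
noncomputable def orb (n : ℕ) (σ : Equiv.Perm (Fin n)) (k : Fin n) : Finset (Fin n) :=
  letI := Classical.decPred fun j : Fin n => ∃ m : ℤ, (σ ^ m) k = j
  Finset.univ.filter (fun j => ∃ m : ℤ, (σ ^ m) k = j)

/-- The set of orbits of `σ` on `Fin n`. -/
noncomputable def orbs (n : ℕ) (σ : Equiv.Perm (Fin n)) : Finset (Finset (Fin n)) :=
  Finset.univ.image (orb n σ)

/-- The orbit of `k` under the group generated by the commuting permutations `σ` and `π`;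
it is the union of the `σ`-orbits belonging to the orbit (under the action of the group
generated by `π` on the set of `σ`-orbits) of the `σ`-orbit of `k`. -/
noncomputable def orb2 (n : ℕ) (σ π : Equiv.Perm (Fin n)) (k : Fin n) : Finset (Fin n) :=
  letI := Classical.decPred fun j : Fin n => ∃ a b : ℤ, (σ ^ a * π ^ b) k = j
  Finset.univ.filter (fun j => ∃ a b : ℤ, (σ ^ a * π ^ b) k = j)

/-- The set of orbits of the group generated by `σ` and `π` on `Fin n`. -/
noncomputable def orbs2 (n : ℕ) (σ π : Equiv.Perm (Fin n)) : Finset (Finset (Fin n)) :=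
  Finset.univ.image (orb2 n σ π)

section AuxA

open Finset Equiv Equiv.Perm

variable {n : ℕ}

private lemma zmod2_mul_self (c : ZMod 2) : c * c = c := by revert c; decide

private lemma zmod2_add_self (c : ZMod 2) : c + c = 0 := by revert c; decide

private lemma Rf_zero_fn (σ : Equiv.Perm (Fin n)) : Rf n σ 0 = 0 := by simp [Rf]

private lemma Rf_one_perm (a : Fin n → ZMod 2) : Rf n 1 a = 0 := by
  rw [Rf, Finset.filter_false_of_mem, Finset.sum_empty]
  rintro p _ ⟨h1, h2⟩
  exact absurd h2 (asymm h1)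

private lemma Rf_congr {σ τ : Equiv.Perm (Fin n)} {a : Fin n → ZMod 2}
    (h : ∀ i, a i ≠ 0 → σ i = τ i) : Rf n σ a = Rf n τ a := by
  classical
  rw [Rf, Rf, Finset.sum_filter, Finset.sum_filter]
  refine Finset.sum_congr rfl fun p _ => ?_
  by_cases h1 : a p.1 = 0
  · simp [h1]
  by_cases h2 : a p.2 = 0
  · simp [h2]
  rw [h p.1 h1, h p.2 h2]

private lemma Rf_smul (σ : Equiv.Perm (Fin n)) (c : ZMod 2) (a : Fin n → ZMod 2) :
    Rf n σ (fun i => c * a i) = c * Rf n σ a := by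
  rw [Rf, Rf, Finset.mul_sum]
  refine Finset.sum_congr rfl fun p _ => ?_
  ring_nf
  rw [sq, zmod2_mul_self c]

end AuxA

section AuxB

open Finset Equiv Equiv.Perm

variable {n : ℕ}

private lemma Rf_add_inv {σ : Equiv.Perm (Fin n)} {u w : Fin n → ZMod 2}
    (hu : ∀ i, u (σ i) = u i) (hw : ∀ i, w (σ i) = w i) :
    Rf n σ (u + w) = Rf n σ u + Rf n σ w := by
  classical
  rw [Rf_add]
  have hS : ∑ p ∈ Finset.univ.filter (fun p : Fin n × Fin n => p.1 < p.2 ∧ σ p.2 < σ p.1),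
      (u p.1 * w p.2 + w p.1 * u p.2) = 0 := by
    rw [Finset.sum_add_distrib]
    set S1 := ∑ p ∈ Finset.univ.filter (fun p : Fin n × Fin n => p.1 < p.2 ∧ σ p.2 < σ p.1),
      u p.1 * w p.2 with hS1
    have hswap : ∑ p ∈ Finset.univ.filter (fun p : Fin n × Fin n => p.1 < p.2 ∧ σ p.2 < σ p.1),
        w p.1 * u p.2
        = ∑ p ∈ Finset.univ.filter (fun p : Fin n × Fin n => p.2 < p.1 ∧ σ p.1 < σ p.2),
            u p.1 * w p.2 := by
      rw [sum_pair_swap (fun p : Fin n × Fin n => p.1 < p.2 ∧ σ p.2 < σ p.1)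
        (fun i j => w i * u j)]
      exact Finset.sum_congr rfl fun p _ => mul_comm _ _
    rw [hswap]
    set S2 := ∑ p ∈ Finset.univ.filter (fun p : Fin n × Fin n => p.2 < p.1 ∧ σ p.1 < σ p.2),
      u p.1 * w p.2 with hS2
    -- show S1 = S2
    have hA : Qf n u w
        = ∑ p ∈ Finset.univ.filter
              (fun p : Fin n × Fin n => p.1 < p.2 ∧ σ p.1 < σ p.2), u p.1 * w p.2 + S1 := by
      rw [Qf, ← Finset.sum_filter_add_sum_filter_not
        (Finset.univ.filter (fun p : Fin n × Fin n => p.1 < p.2))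
        (fun p : Fin n × Fin n => σ p.1 < σ p.2), Finset.filter_filter, Finset.filter_filter]
      congr 1
      refine Finset.sum_congr (Finset.filter_congr ?_) (fun _ _ => rfl)
      intro p _
      constructor
      · rintro ⟨h1, h2⟩
        have hne : σ p.1 ≠ σ p.2 := fun h =>
          absurd h1 (by rw [σ.injective h]; exact lt_irrefl _)
        exact ⟨h1, (flip_lt hne).mp h2⟩
      · rintro ⟨h1, h2⟩
        exact ⟨h1, fun h => absurd h (asymm h2)⟩
    have hB : Qf n u w
        = ∑ p ∈ Finset.univ.filter (fun p : Fin n × Fin n => σ p.1 < σ p.2), u p.1 * w p.2 := by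
      rw [Qf]
      rw [show ∑ p ∈ Finset.univ.filter (fun p : Fin n × Fin n => σ p.1 < σ p.2),
            u p.1 * w p.2
          = ∑ p ∈ Finset.univ.filter (fun p : Fin n × Fin n => σ p.1 < σ p.2),
            u (σ p.1) * w (σ p.2) from
        Finset.sum_congr rfl fun p _ => by rw [hu, hw]]
      exact (sum_pair_perm σ (fun p : Fin n × Fin n => p.1 < p.2) (fun i j => u i * w j)).symm
    have hC : Qf n u w
        = ∑ p ∈ Finset.univ.filter
              (fun p : Fin n × Fin n => p.1 < p.2 ∧ σ p.1 < σ p.2), u p.1 * w p.2 + S2 := by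
      rw [hB, ← Finset.sum_filter_add_sum_filter_not
        (Finset.univ.filter (fun p : Fin n × Fin n => σ p.1 < σ p.2))
        (fun p : Fin n × Fin n => p.1 < p.2), Finset.filter_filter, Finset.filter_filter]
      congr 1
      · refine Finset.sum_congr (Finset.filter_congr ?_) (fun _ _ => rfl)
        intro p _
        exact ⟨fun h => ⟨h.2, h.1⟩, fun h => ⟨h.2, h.1⟩⟩
      · refine Finset.sum_congr (Finset.filter_congr ?_) (fun _ _ => rfl)
        intro p _
        constructor
        · rintro ⟨h1, h2⟩
          have hne : p.1 ≠ p.2 := fun h =>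
            absurd h1 (by rw [h]; exact lt_irrefl _)
          exact ⟨(flip_lt hne).mp h2, h1⟩
        · rintro ⟨h1, h2⟩
          exact ⟨h2, fun h => absurd h (asymm h1)⟩
    have h12 : S1 = S2 := by
      have := hA.symm.trans hC
      exact add_left_cancel this
    rw [h12, zmod2_add_self]
  rw [hS, add_zero]

private lemma Rf_sum_inv {β : Type} [DecidableEq β] {σ : Equiv.Perm (Fin n)}
    (s : Finset β) (f : β → Fin n → ZMod 2)
    (h : ∀ C ∈ s, ∀ i, f C (σ i) = f C i) :
    Rf n σ (∑ C ∈ s, f C) = ∑ C ∈ s, Rf n σ (f C) := by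
  classical
  induction s using Finset.induction_on with
  | empty => simpa using Rf_zero_fn σ
  | @insert C s' hC ih =>
    have hs : ∀ i, (∑ D ∈ s', f D) (σ i) = (∑ D ∈ s', f D) i := by
      intro i
      rw [Finset.sum_apply, Finset.sum_apply]
      exact Finset.sum_congr rfl fun D hD => h D (Finset.mem_insert_of_mem hD) i
    rw [Finset.sum_insert hC, Finset.sum_insert hC,
      Rf_add_inv (h C (Finset.mem_insert_self C s')) hs,
      ih (fun D hD => h D (Finset.mem_insert_of_mem hD))]

end AuxB

section AuxC

open Finset Equiv Equiv.Perm

variable {n : ℕ}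

set_option maxHeartbeats 1600000

set_option maxHeartbeats 1000000 in
private lemma swap_char {x y : Fin n} (hxy : x < y) (p : Fin n × Fin n) :
    (p.1 < p.2 ∧ Equiv.swap x y p.2 < Equiv.swap x y p.1) ↔
      (p = (x, y) ∨ (p.1 = x ∧ x < p.2 ∧ p.2 < y) ∨ (p.2 = y ∧ x < p.1 ∧ p.1 < y)) := by
  obtain ⟨i, j⟩ := p
  simp only [Equiv.swap_apply_def, Prod.ext_iff]
  rw [Fin.lt_def] at hxy
  split_ifs <;>
    (simp only [Fin.lt_def, Fin.ext_iff] at *; omega)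

private lemma Rf_swap_one {x y : Fin n} (hxy : x ≠ y) :
    Rf n (Equiv.swap x y) (fun _ => (1 : ZMod 2)) = 1 := by
  classical
  wlog hlt : x < y generalizing x y
  · rw [Equiv.swap_comm]
    exact this hxy.symm (lt_of_le_of_ne (not_lt.mp hlt) hxy.symm)
  rw [Rf]
  have hS : Finset.univ.filter
        (fun p : Fin n × Fin n => p.1 < p.2 ∧ Equiv.swap x y p.2 < Equiv.swap x y p.1)
      = insert (x, y) (((Ioo x y).image fun z => ((x, z) : Fin n × Fin n))
          ∪ ((Ioo x y).image fun z => ((z, y) : Fin n × Fin n))) := by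
    ext p
    rw [Finset.mem_filter]
    simp only [Finset.mem_univ, true_and, Finset.mem_insert, Finset.mem_union,
      Finset.mem_image, Finset.mem_Ioo]
    rw [swap_char hlt p]
    constructor
    · rintro (h | ⟨h1, h2, h3⟩ | ⟨h1, h2, h3⟩)
      · exact Or.inl h
      · exact Or.inr (Or.inl ⟨p.2, ⟨h2, h3⟩, by rw [← h1]⟩)
      · exact Or.inr (Or.inr ⟨p.1, ⟨h2, h3⟩, by rw [← h1]⟩)
    · rintro (h | ⟨z, ⟨hz1, hz2⟩, rfl⟩ | ⟨z, ⟨hz1, hz2⟩, rfl⟩)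
      · exact Or.inl h
      · exact Or.inr (Or.inl ⟨rfl, hz1, hz2⟩)
      · exact Or.inr (Or.inr ⟨rfl, hz1, hz2⟩)
  rw [hS]
  have hnm : (x, y) ∉ ((Ioo x y).image fun z => ((x, z) : Fin n × Fin n))
      ∪ ((Ioo x y).image fun z => ((z, y) : Fin n × Fin n)) := by
    simp only [Finset.mem_union, Finset.mem_image, Finset.mem_Ioo, Prod.ext_iff]
    rintro (⟨z, ⟨hz1, hz2⟩, _, hz4⟩ | ⟨z, ⟨hz1, hz2⟩, hz3, _⟩)
    · exact absurd (hz4 ▸ hz2) (lt_irrefl y)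
    · exact absurd (hz3 ▸ hz1) (lt_irrefl x)
  have hdisj : Disjoint ((Ioo x y).image fun z => ((x, z) : Fin n × Fin n))
      ((Ioo x y).image fun z => ((z, y) : Fin n × Fin n)) := by
    rw [Finset.disjoint_left]
    simp only [Finset.mem_image, Finset.mem_Ioo, Prod.ext_iff]
    rintro p ⟨z, ⟨hz1, hz2⟩, hz3, hz4⟩ ⟨w, ⟨hw1, hw2⟩, hw3, hw4⟩
    have hzy : z = y := hz4.trans hw4.symm
    exact absurd (hzy ▸ hz2) (lt_irrefl y)
  rw [Finset.sum_const, Finset.card_insert_of_notMem hnm, Finset.card_union_of_disjoint hdisj,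
    Finset.card_image_of_injective _ (fun a b h => (Prod.ext_iff.mp h).2),
    Finset.card_image_of_injective _ (fun a b h => (Prod.ext_iff.mp h).1)]
  rw [nsmul_eq_mul]
  push_cast
  rw [zmod2_add_self]
  ring

private lemma Rf_mul_one (σ τ : Equiv.Perm (Fin n)) :
    Rf n (σ * τ) (fun _ => (1 : ZMod 2))
      = Rf n σ (fun _ => (1 : ZMod 2)) + Rf n τ (fun _ => (1 : ZMod 2)) := by
  have h := Rf_comp σ τ (fun _ => (1 : ZMod 2))
  have h2 : ((fun _ => (1 : ZMod 2)) ∘ τ.symm) = (fun _ => (1 : ZMod 2)) := rfl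
  rw [h2] at h
  rw [h, add_comm]

private lemma sign_eq_rf (σ : Equiv.Perm (Fin n)) :
    Equiv.Perm.sign σ = (-1 : ℤˣ) ^ (Rf n σ (fun _ => (1 : ZMod 2))).val := by
  refine Equiv.Perm.swap_induction_on σ ?_ ?_
  · rw [Rf_one_perm]
    simp
  · intro f x y hxy ih
    rw [Rf_mul_one, Rf_swap_one hxy, Equiv.Perm.sign_mul, Equiv.Perm.sign_swap hxy, ih]
    have key : ∀ c : ZMod 2, (-1 : ℤˣ) ^ ((1 : ZMod 2) + c).val = -(-1 : ℤˣ) ^ c.val := by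
      decide
    rw [key, neg_one_mul]

end AuxC

section AuxD

open Finset Equiv Equiv.Perm

variable {n : ℕ}

set_option maxHeartbeats 1600000

private lemma val_cast_zmod2 (a : ZMod 2) : ((a.val : ℕ) : ZMod 2) = a := by
  revert a; decide

private lemma mem_orb {σ : Equiv.Perm (Fin n)} {k j : Fin n} :
    j ∈ orb n σ k ↔ σ.SameCycle k j := by
  classical
  rw [orb]
  rw [Finset.mem_filter]
  simp only [Finset.mem_univ, true_and]
  rfl

private lemma orb_self (σ : Equiv.Perm (Fin n)) (k : Fin n) : k ∈ orb n σ k :=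
  mem_orb.mpr ⟨0, rfl⟩

private lemma orb_eq_of_mem {σ : Equiv.Perm (Fin n)} {k j : Fin n} (h : j ∈ orb n σ k) :
    orb n σ j = orb n σ k := by
  have hs := mem_orb.mp h
  ext i
  rw [mem_orb, mem_orb]
  exact ⟨fun hi => hs.trans hi, fun hi => hs.symm.trans hi⟩

private lemma mem_orb_apply {σ : Equiv.Perm (Fin n)} {k i : Fin n} :
    σ i ∈ orb n σ k ↔ i ∈ orb n σ k := by
  rw [mem_orb, mem_orb]
  exact Equiv.Perm.sameCycle_apply_right

private lemma Rf_chi (σ : Equiv.Perm (Fin n)) (k : Fin n) :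
    Rf n σ (fun i => if i ∈ orb n σ k then (1 : ZMod 2) else 0)
      = ((orb n σ k).card : ZMod 2) - 1 := by
  classical
  by_cases hk : σ k = k
  · have hC : orb n σ k = {k} := by
      ext j
      rw [mem_orb, Finset.mem_singleton]
      constructor
      · rintro ⟨m, rfl⟩
        exact Equiv.Perm.zpow_apply_eq_self_of_apply_eq_self hk m
      · rintro rfl
        exact ⟨0, rfl⟩
    rw [hC, Finset.card_singleton]
    have h0 : Rf n σ (fun i => if i ∈ ({k} : Finset (Fin n)) then (1 : ZMod 2) else 0) = 0 := by
      rw [Rf]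
      apply Finset.sum_eq_zero
      intro p hp
      obtain ⟨_, h1, _⟩ := Finset.mem_filter.mp hp
      simp only [Finset.mem_singleton]
      rcases eq_or_ne p.1 k with e1 | e1
      · rcases eq_or_ne p.2 k with e2 | e2
        · exact absurd (e1.trans e2.symm) (ne_of_lt h1)
        · simp [e2]
      · simp [e1]
    rw [h0]
    norm_num
  · set c := σ.cycleOf k with hc
    have hcyc : c.IsCycle := isCycle_cycleOf σ hk
    set C := orb n σ k with hCdef
    have hsupp : C = c.support := by
      ext j
      rw [hCdef, mem_orb, Equiv.Perm.mem_support_cycleOf_iff]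
      exact ⟨fun h => ⟨h, Equiv.Perm.mem_support.mpr hk⟩, fun h => h.1⟩
    have hceq : ∀ i ∈ C, c i = σ i := fun i hi =>
      Equiv.Perm.SameCycle.cycleOf_apply (mem_orb.mp hi)
    have hfix : ∀ i, i ∉ C → c i = i := fun i hi =>
      Equiv.Perm.cycleOf_apply_of_not_sameCycle (fun h => hi (mem_orb.mpr h))
    have hmemc : ∀ i, (c i ∈ C ↔ i ∈ C) := by
      intro i
      by_cases hi : i ∈ C
      · rw [hceq i hi, hCdef]
        rw [hCdef] at hi
        simp [hi, mem_orb_apply]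
      · rw [hfix i hi]
    -- step 1 : Rf σ χ_C = Rf c χ_C
    have step1 : Rf n σ (fun i => if i ∈ C then (1 : ZMod 2) else 0)
        = Rf n c (fun i => if i ∈ C then (1 : ZMod 2) else 0) := by
      apply Rf_congr
      intro i hi
      have hiC : i ∈ C := by
        by_contra hiC
        simp [hiC] at hi
      rw [hceq i hiC]
    -- step 2 : decompose the all-ones function
    have hone : (fun _ => (1 : ZMod 2))
        = (fun i => if i ∈ C then (1 : ZMod 2) else 0)
          + (fun i => if i ∈ C then (0 : ZMod 2) else 1) := by
      funext i
      by_cases h : i ∈ C <;> simp [h]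
    have hinv1 : ∀ i, (if c i ∈ C then (1 : ZMod 2) else 0) = (if i ∈ C then 1 else 0) := by
      intro i; simp only [hmemc i]
    have hinv2 : ∀ i, (if c i ∈ C then (0 : ZMod 2) else 1) = (if i ∈ C then 0 else 1) := by
      intro i; simp only [hmemc i]
    have step2 : Rf n c (fun _ => (1 : ZMod 2))
        = Rf n c (fun i => if i ∈ C then (1 : ZMod 2) else 0)
          + Rf n c (fun i => if i ∈ C then (0 : ZMod 2) else 1) := by
      rw [hone]
      exact Rf_add_inv hinv1 hinv2
    have step3 : Rf n c (fun i => if i ∈ C then (0 : ZMod 2) else 1) = 0 := by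
      rw [Rf]
      apply Finset.sum_eq_zero
      intro p hp
      obtain ⟨_, h1, h2⟩ := Finset.mem_filter.mp hp
      by_cases e1 : p.1 ∈ C
      · simp [e1]
      · by_cases e2 : p.2 ∈ C
        · simp [e2]
        · rw [hfix p.1 e1, hfix p.2 e2] at h2
          exact absurd h2 (asymm h1)
    have step4 : Rf n c (fun i => if i ∈ C then (1 : ZMod 2) else 0)
        = Rf n c (fun _ => (1 : ZMod 2)) := by
      rw [step2, step3, add_zero]
    -- step 5 : sign computation
    have hsign := sign_eq_rf c
    rw [hcyc.sign, ← hsupp] at hsign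
    set r := (Rf n c (fun _ => (1 : ZMod 2))).val with hr
    set m := C.card with hm
    have hpow : (-1 : ℤˣ) ^ (r + m) = -1 := by
      rw [pow_add, ← hsign]
      have : (-1 : ℤˣ) ^ m * (-1 : ℤˣ) ^ m = 1 := by
        rw [← pow_add, ← two_mul, pow_mul]
        norm_num
      rw [neg_mul, this]
    have hodd : Odd (r + m) := by
      rw [← Nat.not_even_iff_odd]
      intro he
      rw [he.neg_one_pow] at hpow
      exact absurd hpow (by decide)
    obtain ⟨t, ht⟩ := hodd
    have hcast : ((r : ZMod 2) + (m : ZMod 2)) = 1 := by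
      have h1 : ((r + m : ℕ) : ZMod 2) = (r : ZMod 2) + (m : ZMod 2) := by push_cast; ring
      rw [← h1, ht]
      push_cast
      rw [show ((2 : ZMod 2)) = 0 by decide]
      ring
    have hval : Rf n c (fun _ => (1 : ZMod 2)) = (r : ZMod 2) := (val_cast_zmod2 _).symm
    rw [step1, step4, hval]
    have : (r : ZMod 2) = (m : ZMod 2) - 1 := by
      have h2 : (r : ZMod 2) = 1 - (m : ZMod 2) := by
        rw [← hcast]; ring
      rw [h2]
      have : ∀ a : ZMod 2, 1 - a = a - 1 := by decide
      exact this _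
    rw [this, hm]

end AuxD

section AuxE

open Finset Equiv Equiv.Perm

variable {n : ℕ}

set_option maxHeartbeats 1600000

private lemma v_zpow {σ : Equiv.Perm (Fin n)} {v : Fin n → ZMod 2}
    (hv : ∀ i, v (σ i) = v i) : ∀ (m : ℤ) (j : Fin n), v ((σ ^ m) j) = v j := by
  have hinv : ∀ j, v (σ⁻¹ j) = v j := by
    intro j
    have := hv (σ⁻¹ j)
    rw [← Equiv.Perm.mul_apply, mul_inv_cancel, Equiv.Perm.one_apply] at this
    exact this.symm
  intro m
  induction m using Int.induction_on with
  | zero => simp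
  | succ k ih =>
    intro j
    rw [show ((k : ℤ) + 1) = 1 + (k : ℤ) by ring, zpow_add, Equiv.Perm.mul_apply, zpow_one, hv,
      ih]
  | pred k ih =>
    intro j
    rw [show (-(k : ℤ) - 1) = (-1) + (-(k : ℤ)) by ring, zpow_add, Equiv.Perm.mul_apply,
      zpow_neg, zpow_one, hinv, ih]

private lemma v_const_orb {σ : Equiv.Perm (Fin n)} {v : Fin n → ZMod 2}
    (hv : ∀ i, v (σ i) = v i) {k j : Fin n} (h : j ∈ orb n σ k) : v j = v k := by
  obtain ⟨m, hm⟩ := mem_orb.mp h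
  rw [← hm, v_zpow hv]

private lemma Rf_eq_orbit_sum (σ : Equiv.Perm (Fin n)) (v : Fin n → ZMod 2)
    (hv : ∀ i, v (σ i) = v i)
    (rep : Finset (Fin n) → Fin n) (hrep : ∀ C ∈ orbs n σ, rep C ∈ C) :
    Rf n σ v = ((∑ C ∈ orbs n σ, (v (rep C)).val * (C.card - 1) : ℕ) : ZMod 2) := by
  classical
  have horbs_mem : ∀ i : Fin n, orb n σ i ∈ orbs n σ := fun i =>
    Finset.mem_image_of_mem _ (Finset.mem_univ i)
  -- decompose v as a sum of indicator functions of orbits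
  have hdecomp : v = ∑ C ∈ orbs n σ, (fun i => v (rep C) * (if i ∈ C then (1 : ZMod 2) else 0)) := by
    funext i
    rw [Finset.sum_apply]
    rw [Finset.sum_eq_single (orb n σ i)]
    · have hrepi : rep (orb n σ i) ∈ orb n σ i := hrep _ (horbs_mem i)
      rw [if_pos (orb_self σ i), mul_one, v_const_orb hv hrepi]
    · intro C hC hne
      obtain ⟨k, _, rfl⟩ := Finset.mem_image.mp hC
      rw [if_neg, mul_zero]
      intro hi
      exact hne (orb_eq_of_mem hi).symm
    · intro h
      exact absurd (horbs_mem i) h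
  -- invariance of each summand
  have hinv : ∀ C ∈ orbs n σ, ∀ i : Fin n,
      (fun i => v (rep C) * (if i ∈ C then (1 : ZMod 2) else 0)) (σ i)
        = (fun i => v (rep C) * (if i ∈ C then (1 : ZMod 2) else 0)) i := by
    intro C hC i
    obtain ⟨k, _, rfl⟩ := Finset.mem_image.mp hC
    simp only
    rw [show (if σ i ∈ orb n σ k then (1 : ZMod 2) else 0) = (if i ∈ orb n σ k then 1 else 0) by
      simp only [mem_orb_apply]]
  calc Rf n σ v = ∑ C ∈ orbs n σ, Rf n σ (fun i => v (rep C) * (if i ∈ C then (1 : ZMod 2) else 0)) := by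
        conv_lhs => rw [hdecomp]
        exact Rf_sum_inv (orbs n σ) _ hinv
    _ = ∑ C ∈ orbs n σ, v (rep C) * ((C.card : ZMod 2) - 1) := by
        refine Finset.sum_congr rfl fun C hC => ?_
        obtain ⟨k, _, rfl⟩ := Finset.mem_image.mp hC
        rw [Rf_smul, Rf_chi]
    _ = ((∑ C ∈ orbs n σ, (v (rep C)).val * (C.card - 1) : ℕ) : ZMod 2) := by
        rw [Nat.cast_sum]
        refine Finset.sum_congr rfl fun C hC => ?_
        have hcard : 1 ≤ C.card := by
          obtain ⟨k, _, rfl⟩ := Finset.mem_image.mp hC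
          exact Finset.card_pos.mpr ⟨k, orb_self σ k⟩
        rw [Nat.cast_mul, Nat.cast_sub hcard, Nat.cast_one, val_cast_zmod2]

private lemma epsG_pow (m : ℕ) : epsG n ^ m = (⟨⟨0, (m : ZMod 2)⟩, 1⟩ : G n) := by
  induction m with
  | zero =>
    rw [pow_zero]
    refine G.ext ?_ ?_
    · refine H.ext ?_ ?_ <;> simp [epsG]
    · rfl
  | succ m ih =>
    rw [pow_succ, ih]
    refine G.ext ?_ ?_
    · show (⟨0, (m : ZMod 2)⟩ : H n) * actH n 1 (⟨0, 1⟩ : H n) = ⟨0, ((m + 1 : ℕ) : ZMod 2)⟩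
      rw [actH_one_perm]
      refine H.ext ?_ ?_
      · show (0 : Fin n → ZMod 2) + 0 = 0
        simp
      · show (m : ZMod 2) + 1 + Qf n 0 0 = ((m + 1 : ℕ) : ZMod 2)
        rw [H.Qf_zero_left]
        push_cast
        ring
    · show (1 : Equiv.Perm (Fin n)) * 1 = 1
      simp

end AuxE
open scoped commutatorElement
/-- For `σ ∈ Sₙ` and `τ = (v, π) ∈ B n` commuting with `(0, σ)`,
`φ((0,σ), τ) = ε̂^N` where `N = Σ_C v(k_C)·(|C| − 1)`, the sum running over the orbits
`C` of `σ` on `Fin n`, with `k_C` any element of `C`. -/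
theorem phi_formula_single (n : ℕ) (hn : 0 < n) (σ : Equiv.Perm (Fin n))
    (v : Fin n → ZMod 2) (π : Equiv.Perm (Fin n))
    (hc : Commute ((⟨0, σ⟩ : B n)) ⟨v, π⟩)
    (rep : Finset (Fin n) → Fin n) (hrep : ∀ C ∈ orbs n σ, rep C ∈ C)
    (σt τt : G n) (hσt : pG n σt = ⟨0, σ⟩) (hτt : pG n τt = ⟨v, π⟩) :
    ⁅σt, τt⁆ = epsG n ^ (∑ C ∈ orbs n σ, (v (rep C)).val * (C.card - 1)) := by
  classical
  have hva : v ∘ σ.symm = v := by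
    have h := congrArg B.a hc
    simp only [B.mul_a] at h
    funext i
    have h2 := congrFun h i
    simpa using h2
  have hvs : ∀ i, v (σ i) = v i := by
    intro i
    have h2 := congrFun hva (σ i)
    simp only [Function.comp_apply, Equiv.symm_apply_apply] at h2
    exact h2.symm
  have hss : σ * π = π * σ := congrArg B.s hc
  have ha1 : σt.h.a = 0 := congrArg B.a hσt
  have hs1 : σt.s = σ := congrArg B.s hσt
  have ha2 : τt.h.a = v := congrArg B.a hτt
  have hs2 : τt.s = π := congrArg B.s hτt
  set g : G n := ⟨⟨0, Rf n σ v⟩, 1⟩ with hg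
  have e1 : σt * τt = ⟨⟨v ∘ σ.symm, σt.h.b + τt.h.b + Rf n σ v⟩, σ * π⟩ := by
    refine G.ext (H.ext ?_ ?_) ?_
    · show σt.h.a + τt.h.a ∘ σt.s.symm = v ∘ σ.symm
      rw [ha1, ha2, hs1, zero_add]
    · show σt.h.b + (τt.h.b + Rf n σt.s τt.h.a) + Qf n σt.h.a (τt.h.a ∘ σt.s.symm)
        = σt.h.b + τt.h.b + Rf n σ v
      rw [ha1, ha2, hs1, H.Qf_zero_left]
      ring
    · show σt.s * τt.s = σ * π
      rw [hs1, hs2]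
  have e2 : τt * σt = ⟨⟨v, σt.h.b + τt.h.b⟩, π * σ⟩ := by
    refine G.ext (H.ext ?_ ?_) ?_
    · show τt.h.a + σt.h.a ∘ τt.s.symm = v
      rw [ha1, ha2]
      funext i
      simp
    · show τt.h.b + (σt.h.b + Rf n τt.s σt.h.a) + Qf n τt.h.a (σt.h.a ∘ τt.s.symm)
        = σt.h.b + τt.h.b
      rw [ha1, ha2, Rf_zero_fn]
      rw [show ((0 : Fin n → ZMod 2) ∘ τt.s.symm) = 0 from rfl, H.Qf_zero_right]
      ring
    · show τt.s * σt.s = π * σ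
      rw [hs1, hs2]
  have key : σt * τt = g * (τt * σt) := by
    rw [e1, e2]
    refine G.ext (H.ext ?_ ?_) ?_
    · show v ∘ σ.symm = (0 : Fin n → ZMod 2) + v ∘ (1 : Equiv.Perm (Fin n)).symm
      rw [hva, zero_add]
      rfl
    · show σt.h.b + τt.h.b + Rf n σ v
        = Rf n σ v + (σt.h.b + τt.h.b + Rf n 1 v)
          + Qf n (0 : Fin n → ZMod 2) (v ∘ (1 : Equiv.Perm (Fin n)).symm)
      rw [Rf_one_perm, H.Qf_zero_left]
      ring
    · show σ * π = 1 * (π * σ)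
      rw [one_mul, hss]
  have hcomm : ⁅σt, τt⁆ = g := by
    rw [commutatorElement_def]
    have h3 : σt * τt * σt⁻¹ * τt⁻¹ = (σt * τt) * (τt * σt)⁻¹ := by group
    rw [h3, key, mul_inv_cancel_right]
  rw [hcomm, epsG_pow]
  refine G.ext (H.ext rfl ?_) rfl
  show Rf n σ v = ((∑ C ∈ orbs n σ, (v (rep C)).val * (C.card - 1) : ℕ) : ZMod 2)
  exact Rf_eq_orbit_sum σ v hvs rep hrep
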